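/- Let λ = (n−k, k) with n−k and k odd, n−k−2 > k ≥ 1, and n = 2m. Let W = ⟨e_1⟩ ⊆ V_λ. Then W is isotropic for β_λ, W^⊥ = ⟨e_1, …, e_{n−k−1}, f_1, …, f_k⟩, and x_λ(W) ⊆ W, x_λ(W^⊥) ⊆ W^⊥. Moreover, with ν = (n−k−2, k), the linear map Q : W^⊥/W → V_ν determined by Q(e_{j+1} + W) = √−1·e_j for 1 ≤ j ≤ n−k−2 and Q(f_j + W) = f_j for 1 ≤ j ≤ k is a linear isomorphism satisfying β̄_λ(u, v) = β_ν(Q u, Q v) for all u, v ∈ W^⊥/W, and Q ∘ x̄_λ = x_ν ∘ Q. -/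
import Mathlib


open Complex Submodule

noncomputable section

/-- `V p q` is the vector space `ℂ^(p+q)` with coordinates indexed by `Fin p ⊕ Fin q`,
corresponding to the basis `e_1, …, e_p, f_1, …, f_q` of `V_λ` for `λ = (p, q)`. -/
abbrev V (p q : ℕ) := (Fin p ⊕ Fin q) → ℂ

/-- The basis vector `e_i` (1-based index `i`; it is `0` if `i` is out of range). -/
def ee (p q : ℕ) (i : ℕ) : V p q :=
  Sum.elim (fun j => if (j : ℕ) + 1 = i then 1 else 0) (fun _ => 0)

/-- The basis vector `f_j` (1-based index `j`; it is `0` if `j` is out of range). -/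
def ff (p q : ℕ) (i : ℕ) : V p q :=
  Sum.elim (fun _ => 0) (fun j => if (j : ℕ) + 1 = i then 1 else 0)

/-- The nilpotent endomorphism `x_λ` with `x(e_i) = e_{i-1}`, `x(f_j) = f_{j-1}`. -/
def xmap (p q : ℕ) : V p q →ₗ[ℂ] V p q where
  toFun v := Sum.elim
    (fun j => if h : (j : ℕ) + 1 < p then v (Sum.inl ⟨(j : ℕ) + 1, h⟩) else 0)
    (fun j => if h : (j : ℕ) + 1 < q then v (Sum.inr ⟨(j : ℕ) + 1, h⟩) else 0)
  map_add' u v := by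
    funext s; cases s <;> dsimp <;> split <;> simp
  map_smul' c v := by
    funext s; cases s <;> dsimp <;> split <;> simp

/-- The Gram matrix of the bilinear form `β_λ` for `λ = (p, q)` (0-based indices). -/
def gram (p q : ℕ) : Matrix (Fin p ⊕ Fin q) (Fin p ⊕ Fin q) ℂ :=
  fun s t =>
    match s, t with
    | Sum.inl i, Sum.inl j =>
        if p = q then 0 else if (i : ℕ) + (j : ℕ) + 2 = p + 1 then (-1 : ℂ) ^ (i : ℕ) else 0
    | Sum.inl i, Sum.inr j =>
        if p = q then (if (i : ℕ) + (j : ℕ) + 2 = p + 1 then (-1 : ℂ) ^ (i : ℕ) else 0) else 0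
    | Sum.inr i, Sum.inl j =>
        if p = q then (if (j : ℕ) + (i : ℕ) + 2 = p + 1 then (-1 : ℂ) ^ (j : ℕ) else 0) else 0
    | Sum.inr i, Sum.inr j =>
        if p = q then 0 else if (i : ℕ) + (j : ℕ) + 2 = q + 1 then (-1 : ℂ) ^ (i : ℕ) else 0

/-- The symmetric bilinear form `β_λ` for `λ = (p, q)`. -/
def beta (p q : ℕ) : LinearMap.BilinForm ℂ (V p q) :=
  Matrix.toLinearMap₂' ℂ (gram p q)

/-- Orthogonal complement with respect to `β_λ`. -/
def orth (p q : ℕ) (W : Submodule ℂ (V p q)) : Submodule ℂ (V p q) :=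
  (beta p q).orthogonal W

/-- The subspace `⟨e_1, …, e_r, f_1, …, f_s⟩`. -/
def EF (p q r s : ℕ) : Submodule ℂ (V p q) :=
  Submodule.span ℂ
    ({v | ∃ i, 1 ≤ i ∧ i ≤ r ∧ v = ee p q i} ∪ {v | ∃ j, 1 ≤ j ∧ j ≤ s ∧ v = ff p q j})

/-- A complete isotropic flag in `(V_λ, β_λ)`, encoded as a function `ℕ → Submodule`
which is `⊤` from degree `p+q` on. -/
def IsFlag (p q : ℕ) (F : ℕ → Submodule ℂ (V p q)) : Prop :=
  (∀ i ≤ p + q, Module.finrank ℂ (F i) = i) ∧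
  (∀ i < p + q, F i ≤ F (i + 1)) ∧
  (∀ i ≤ p + q, F (p + q - i) = orth p q (F i)) ∧
  (∀ i, p + q ≤ i → F i = ⊤)

/-- The flag `F` lies in the Springer fiber of `x_λ`. -/
def InSpringer (p q : ℕ) (F : ℕ → Submodule ℂ (V p q)) : Prop :=
  ∀ i < p + q, (F (i + 1)).map (xmap p q) ≤ F i
/-- The coordinate projection `V_(p,q) → V_(p',q')`, sending `e_i ↦ e_i` (resp. `f_j ↦ f_j`)
when the index is in range and to `0` otherwise. -/
def Pmap (p q p' q' : ℕ) : V p q →ₗ[ℂ] V p' q' where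
  toFun v := Sum.elim
    (fun i => if h : (i : ℕ) < p then v (Sum.inl ⟨(i : ℕ), h⟩) else 0)
    (fun j => if h : (j : ℕ) < q then v (Sum.inr ⟨(j : ℕ), h⟩) else 0)
  map_add' u v := by
    funext s; cases s <;> dsimp <;> split <;> simp
  map_smul' c v := by
    funext s; cases s <;> dsimp <;> split <;> simp

/-- The flag in `V_(p',q')` induced, via a linear map `Q` defined on `W^⊥` and killing `W`
(representing an isomorphism `W^⊥/W ≅ V_(p',q')`), by the part `F_l ⊆ F_{l+1} ⊆ …` of a
flag `F` in `V_(p,q)`:  `F''_i = Q(F_{l+i}/W)` for `i ≤ (p'+q')/2`, and the remaining spaces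
are determined by taking orthogonal complements with respect to `β_(p',q')`. -/
def Qflag (p q p' q' l : ℕ) (W : Submodule ℂ (V p q)) (Q : V p q →ₗ[ℂ] V p' q')
    (F : ℕ → Submodule ℂ (V p q)) : ℕ → Submodule ℂ (V p' q') :=
  fun i =>
    if i ≤ (p' + q') / 2 then (F (l + i) ⊓ orth p q W).map Q
    else if i ≤ p' + q' then orth p' q' ((F (l + (p' + q' - i)) ⊓ orth p q W).map Q)
    else ⊤

/-- The flag in `V_(2t,2t)` obtained from a flag `F` in `V_(p,q)` by applying the projection
`Pmap` to `F_0, …, F_{2t}` and completing by orthogonal complements. -/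
def Pflag (p q t : ℕ) (F : ℕ → Submodule ℂ (V p q)) : ℕ → Submodule ℂ (V (2*t) (2*t)) :=
  fun i =>
    if i ≤ 2*t then (F i).map (Pmap p q (2*t) (2*t))
    else if i ≤ 4*t then orth (2*t) (2*t) ((F (4*t - i)).map (Pmap p q (2*t) (2*t)))
    else ⊤

/-- The conditions determining the quotient isomorphism `Q^III_4 : W^⊥/W → V_ν`
(`W = ⟨e_1⟩`, `λ = (p,k)` with `p - 2 > k`, `ν = (p-2,k)`):
`Q(e_{j+1} + W) = √-1·e_j` for `1 ≤ j ≤ p-2` and `Q(f_j + W) = f_j` for `1 ≤ j ≤ k`,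
encoded on an ambient linear map killing `W`. -/
def QCondIII4 (p k : ℕ) (Q : V p k →ₗ[ℂ] V (p-2) k) : Prop :=
  (∀ j, 1 ≤ j → j ≤ p - 2 → Q (ee p k (j+1)) = Complex.I • ee (p-2) k j) ∧
  (∀ j, 1 ≤ j → j ≤ k → Q (ff p k j) = ff (p-2) k j) ∧
  (∀ u ∈ EF p k 1 0, Q u = 0)


section Helpers

lemma ee_inl (p q i : ℕ) (t : Fin p) : ee p q i (Sum.inl t) = if (t:ℕ)+1 = i then 1 else 0 := rfl
lemma ee_inr (p q i : ℕ) (t : Fin q) : ee p q i (Sum.inr t) = 0 := rfl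
lemma ff_inl (p q i : ℕ) (t : Fin p) : ff p q i (Sum.inl t) = 0 := rfl
lemma ff_inr (p q i : ℕ) (t : Fin q) : ff p q i (Sum.inr t) = if (t:ℕ)+1 = i then 1 else 0 := rfl

lemma xmap_inl (p q : ℕ) (v : V p q) (t : Fin p) :
    xmap p q v (Sum.inl t) = if h : (t:ℕ)+1 < p then v (Sum.inl ⟨(t:ℕ)+1, h⟩) else 0 := rfl
lemma xmap_inr (p q : ℕ) (v : V p q) (t : Fin q) :
    xmap p q v (Sum.inr t) = if h : (t:ℕ)+1 < q then v (Sum.inr ⟨(t:ℕ)+1, h⟩) else 0 := rfl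

lemma gram_ll (p q : ℕ) (i j : Fin p) : gram p q (Sum.inl i) (Sum.inl j)
    = if p = q then 0 else if (i:ℕ) + (j:ℕ) + 2 = p + 1 then (-1:ℂ)^(i:ℕ) else 0 := rfl
lemma gram_lr (p q : ℕ) (i : Fin p) (j : Fin q) : gram p q (Sum.inl i) (Sum.inr j)
    = if p = q then (if (i:ℕ) + (j:ℕ) + 2 = p + 1 then (-1:ℂ)^(i:ℕ) else 0) else 0 := rfl
lemma gram_rl (p q : ℕ) (i : Fin q) (j : Fin p) : gram p q (Sum.inr i) (Sum.inl j)
    = if p = q then (if (j:ℕ) + (i:ℕ) + 2 = p + 1 then (-1:ℂ)^(j:ℕ) else 0) else 0 := rfl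
lemma gram_rr (p q : ℕ) (i j : Fin q) : gram p q (Sum.inr i) (Sum.inr j)
    = if p = q then 0 else if (i:ℕ) + (j:ℕ) + 2 = q + 1 then (-1:ℂ)^(i:ℕ) else 0 := rfl

lemma decomp (p q : ℕ) (v : V p q) :
    v = (∑ i : Fin p, v (Sum.inl i) • ee p q ((i:ℕ)+1))
      + (∑ j : Fin q, v (Sum.inr j) • ff p q ((j:ℕ)+1)) := by
  funext s
  cases s with
  | inl t =>
    rw [Pi.add_apply, Finset.sum_apply, Finset.sum_apply, Finset.sum_eq_single t]
    · simp [ee_inl, ff_inl]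
    · intro b _ hb
      simp only [Pi.smul_apply, ee_inl, smul_eq_mul]
      rw [if_neg (fun h => hb (Fin.ext (by omega))), mul_zero]
    · simp
  | inr t =>
    rw [Pi.add_apply, Finset.sum_apply, Finset.sum_apply, Finset.sum_eq_single t]
    · simp [ee_inr, ff_inr]
    · intro b _ hb
      simp only [Pi.smul_apply, ff_inr, smul_eq_mul]
      rw [if_neg (fun h => hb (Fin.ext (by omega))), mul_zero]
    · simp

lemma mem_EF {p q r s : ℕ} {v : V p q} :
    v ∈ EF p q r s ↔ (∀ i : Fin p, r ≤ (i:ℕ) → v (Sum.inl i) = 0)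
      ∧ (∀ j : Fin q, s ≤ (j:ℕ) → v (Sum.inr j) = 0) := by
  constructor
  · intro hv
    induction hv using Submodule.span_induction with
    | mem x hx =>
      rcases hx with ⟨i, h1, h2, rfl⟩ | ⟨j, h1, h2, rfl⟩
      · exact ⟨fun t ht => by rw [ee_inl, if_neg (by omega)], fun t ht => rfl⟩
      · exact ⟨fun t ht => rfl, fun t ht => by rw [ff_inr, if_neg (by omega)]⟩
    | zero => exact ⟨fun _ _ => rfl, fun _ _ => rfl⟩
    | add x y hx hy ihx ihy =>
      exact ⟨fun t ht => by rw [Pi.add_apply, ihx.1 t ht, ihy.1 t ht, add_zero],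
             fun t ht => by rw [Pi.add_apply, ihx.2 t ht, ihy.2 t ht, add_zero]⟩
    | smul c x hx ihx =>
      exact ⟨fun t ht => by rw [Pi.smul_apply, ihx.1 t ht, smul_zero],
             fun t ht => by rw [Pi.smul_apply, ihx.2 t ht, smul_zero]⟩
  · rintro ⟨h1, h2⟩
    rw [decomp p q v]
    apply add_mem
    · apply Submodule.sum_mem
      intro i _
      by_cases hi : (i:ℕ) < r
      · exact Submodule.smul_mem _ _ (subset_span (Or.inl ⟨(i:ℕ)+1, by omega, by omega, rfl⟩))
      · rw [h1 i (by omega), zero_smul]; exact zero_mem _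
    · apply Submodule.sum_mem
      intro j _
      by_cases hj : (j:ℕ) < s
      · exact Submodule.smul_mem _ _ (subset_span (Or.inr ⟨(j:ℕ)+1, by omega, by omega, rfl⟩))
      · rw [h2 j (by omega), zero_smul]; exact zero_mem _

lemma beta_eval (p q : ℕ) (u v : V p q) :
    beta p q u v =
      (∑ i : Fin p, ∑ j : Fin p, u (Sum.inl i) * (v (Sum.inl j) * gram p q (Sum.inl i) (Sum.inl j)))
    + (∑ i : Fin p, ∑ j : Fin q, u (Sum.inl i) * (v (Sum.inr j) * gram p q (Sum.inl i) (Sum.inr j)))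
    + (∑ i : Fin q, ∑ j : Fin p, u (Sum.inr i) * (v (Sum.inl j) * gram p q (Sum.inr i) (Sum.inl j)))
    + (∑ i : Fin q, ∑ j : Fin q, u (Sum.inr i) * (v (Sum.inr j) * gram p q (Sum.inr i) (Sum.inr j))) := by
  rw [beta, Matrix.toLinearMap₂'_apply]
  rw [Fintype.sum_sum_type]
  simp only [Fintype.sum_sum_type, smul_eq_mul, Finset.sum_add_distrib]
  ring

end Helpers

section Beta

lemma sum_collapseP {n : ℕ} (a : ℕ) (ha : a < n) {g : Fin n → ℂ}
    (hg : ∀ i : Fin n, (i:ℕ) ≠ a → g i = 0) :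
    (∑ i : Fin n, g i) = g ⟨a, ha⟩ := by
  rw [Finset.sum_eq_single (⟨a, ha⟩ : Fin n)]
  · intro c _ hc; exact hg c (fun h => hc (Fin.ext h))
  · intro h; exact absurd (Finset.mem_univ _) h

lemma beta_ee_ee (p q a b : ℕ) (hpq : p ≠ q) (ha : 1 ≤ a) (ha' : a ≤ p) (hb : 1 ≤ b) (hb' : b ≤ p) :
    beta p q (ee p q a) (ee p q b) = if a + b = p + 1 then (-1:ℂ)^(a-1) else 0 := by
  rw [beta_eval]
  simp only [ee_inl, ee_inr, gram_ll, gram_lr, gram_rl, gram_rr, if_neg hpq,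
    mul_zero, zero_mul, Finset.sum_const_zero, add_zero]
  rw [sum_collapseP (a-1) (by omega)
    (fun i hi => Finset.sum_eq_zero (fun j _ => by rw [if_neg (by omega), zero_mul]))]
  rw [sum_collapseP (b-1) (by omega) (fun j hj => by
    show (if (a-1)+1 = a then (1:ℂ) else 0) * ((if (j:ℕ)+1 = b then (1:ℂ) else 0) * _) = 0
    rw [show (if (j:ℕ)+1 = b then (1:ℂ) else 0) = 0 from if_neg (by omega), zero_mul, mul_zero])]
  show (if (a-1)+1 = a then (1:ℂ) else 0) * ((if (b-1)+1 = b then (1:ℂ) else 0) *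
    (if (a-1)+(b-1)+2 = p+1 then (-1:ℂ)^(a-1) else 0)) = _
  rw [if_pos (by omega), if_pos (by omega), one_mul, one_mul]
  split_ifs with h1 h2 h3 <;> first | rfl | omega

lemma beta_ff_ff (p q a b : ℕ) (hpq : p ≠ q) (ha : 1 ≤ a) (ha' : a ≤ q) (hb : 1 ≤ b) (hb' : b ≤ q) :
    beta p q (ff p q a) (ff p q b) = if a + b = q + 1 then (-1:ℂ)^(a-1) else 0 := by
  rw [beta_eval]
  simp only [ee_inl, ee_inr, ff_inl, ff_inr, gram_ll, gram_lr, gram_rl, gram_rr, if_neg hpq,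
    mul_zero, zero_mul, Finset.sum_const_zero, zero_add]
  rw [sum_collapseP (a-1) (by omega)
    (fun i hi => Finset.sum_eq_zero (fun j _ => by rw [if_neg (by omega), zero_mul]))]
  rw [sum_collapseP (b-1) (by omega) (fun j hj => by
    show (if (a-1)+1 = a then (1:ℂ) else 0) * ((if (j:ℕ)+1 = b then (1:ℂ) else 0) * _) = 0
    rw [show (if (j:ℕ)+1 = b then (1:ℂ) else 0) = 0 from if_neg (by omega), zero_mul, mul_zero])]
  show (if (a-1)+1 = a then (1:ℂ) else 0) * ((if (b-1)+1 = b then (1:ℂ) else 0) *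
    (if (a-1)+(b-1)+2 = q+1 then (-1:ℂ)^(a-1) else 0)) = _
  rw [if_pos (by omega), if_pos (by omega), one_mul, one_mul]
  split_ifs with h1 h2 h3 <;> first | rfl | omega

lemma beta_ee_ff (p q a b : ℕ) (hpq : p ≠ q) :
    beta p q (ee p q a) (ff p q b) = 0 := by
  rw [beta_eval]
  simp [ee_inl, ee_inr, ff_inl, ff_inr, gram_lr, if_neg hpq]

lemma beta_ff_ee (p q a b : ℕ) (hpq : p ≠ q) :
    beta p q (ff p q a) (ee p q b) = 0 := by
  rw [beta_eval]
  simp [ee_inl, ee_inr, ff_inl, ff_inr, gram_rl, if_neg hpq]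

lemma beta_ee1 (p q : ℕ) (hpq : p ≠ q) (hp1 : 1 ≤ p) (v : V p q) :
    beta p q (ee p q 1) v = v (Sum.inl ⟨p-1, by omega⟩) := by
  rw [beta_eval]
  simp only [ee_inl, ee_inr, gram_ll, gram_lr, gram_rl, gram_rr, if_neg hpq,
    mul_zero, zero_mul, Finset.sum_const_zero, add_zero]
  rw [sum_collapseP 0 (by omega)
    (fun i hi => Finset.sum_eq_zero (fun j _ => by rw [if_neg (by omega), zero_mul]))]
  rw [sum_collapseP (p-1) (by omega) (fun j hj => by
    show (if (0:ℕ)+1 = 1 then (1:ℂ) else 0) * (v (Sum.inl j) *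
      (if 0 + (j:ℕ) + 2 = p+1 then (-1:ℂ)^(0:ℕ) else 0)) = 0
    rw [show (if 0 + (j:ℕ) + 2 = p+1 then (-1:ℂ)^(0:ℕ) else 0) = 0 from if_neg (by omega),
      mul_zero, mul_zero])]
  show (if (0:ℕ)+1 = 1 then (1:ℂ) else 0) * (v (Sum.inl ⟨p-1, by omega⟩) *
    (if 0 + (p-1) + 2 = p+1 then (-1:ℂ)^(0:ℕ) else 0)) = _
  rw [if_pos rfl, if_pos (by omega), pow_zero, one_mul, mul_one]

end Beta

section Orth

lemma mem_orth (p k : ℕ) (hpq : p ≠ k) (hp1 : 1 ≤ p) (u : V p k) :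
    u ∈ orth p k (EF p k 1 0) ↔ u (Sum.inl ⟨p-1, by omega⟩) = 0 := by
  constructor
  · intro h
    have h2 := h (ee p k 1) (subset_span (Or.inl ⟨1, le_refl 1, le_refl 1, rfl⟩))
    have h3 : beta p k (ee p k 1) u = 0 := h2
    rwa [beta_ee1 p k hpq hp1] at h3
  · intro h n hn
    induction hn using Submodule.span_induction with
    | mem x hx =>
      rcases hx with ⟨i, h1, h2, rfl⟩ | ⟨j, h1, h2, rfl⟩
      · obtain rfl : i = 1 := le_antisymm h2 h1
        show beta p k (ee p k 1) u = 0
        rw [beta_ee1 p k hpq hp1]; exact h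
      · omega
    | zero => show beta p k 0 u = 0; rw [map_zero]; rfl
    | add x y _ _ hx hy =>
      show beta p k (x + y) u = 0
      rw [map_add, LinearMap.add_apply, show beta p k x u = 0 from hx,
        show beta p k y u = 0 from hy, add_zero]
    | smul c x _ hx =>
      show beta p k (c • x) u = 0
      rw [map_smul, LinearMap.smul_apply, show beta p k x u = 0 from hx, smul_zero]

lemma orth_eq (p k : ℕ) (hpq : p ≠ k) (hp1 : 1 ≤ p) :
    orth p k (EF p k 1 0) = EF p k (p-1) k := by
  ext u
  rw [mem_orth p k hpq hp1, mem_EF]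
  constructor
  · intro h
    refine ⟨fun i hi => ?_, fun j hj => absurd j.isLt (by omega)⟩
    have h2 : i = ⟨p-1, by omega⟩ := Fin.ext (by have := i.isLt; simp; omega)
    rw [h2]; exact h
  · intro h; exact h.1 ⟨p-1, by omega⟩ (by simp)

def Qzero (p k : ℕ) : V p k →ₗ[ℂ] V (p-2) k where
  toFun v := Sum.elim
    (fun i : Fin (p-2) => Complex.I * v (Sum.inl ⟨(i:ℕ)+1, by omega⟩))
    (fun j : Fin k => v (Sum.inr j))
  map_add' u v := by
    funext s; cases s <;> dsimp <;> ring
  map_smul' c v := by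
    funext s; cases s <;> dsimp <;> ring

lemma Qzero_inl (p k : ℕ) (v : V p k) (i : Fin (p-2)) :
    Qzero p k v (Sum.inl i) = Complex.I * v (Sum.inl ⟨(i:ℕ)+1, by omega⟩) := rfl
lemma Qzero_inr (p k : ℕ) (v : V p k) (j : Fin k) :
    Qzero p k v (Sum.inr j) = v (Sum.inr j) := rfl

lemma Qzero_cond (p k : ℕ) : QCondIII4 p k (Qzero p k) := by
  refine ⟨fun j hj1 hj2 => ?_, fun j hj1 hj2 => ?_, fun u hu => ?_⟩
  · funext s
    cases s with
    | inl i =>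
      show Complex.I * (if (i:ℕ)+1+1 = j+1 then (1:ℂ) else 0)
        = Complex.I * (if (i:ℕ)+1 = j then (1:ℂ) else 0)
      split_ifs with h1 h2 <;> first | rfl | omega
    | inr t =>
      rw [Qzero_inr, ee_inr, Pi.smul_apply, ee_inr, smul_zero]
  · funext s
    cases s with
    | inl i => show Complex.I * (0:ℂ) = (0:ℂ); rw [mul_zero]
    | inr t => rfl
  · obtain ⟨h1, h2⟩ := mem_EF.mp hu
    funext s
    cases s with
    | inl i =>
      show Complex.I * u (Sum.inl ⟨(i:ℕ)+1, _⟩) = 0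
      rw [h1 _ (by simp), mul_zero]
    | inr t => exact h2 t (by omega)

lemma Q_agree {p k : ℕ} (Q Q' : V p k →ₗ[ℂ] V (p-2) k)
    (hQ : QCondIII4 p k Q) (hQ' : QCondIII4 p k Q') :
    ∀ u ∈ EF p k (p-1) k, Q u = Q' u := by
  intro u hu
  induction hu using Submodule.span_induction with
  | mem x hx =>
    rcases hx with ⟨i, h1, h2, rfl⟩ | ⟨j, h1, h2, rfl⟩
    · rcases eq_or_lt_of_le h1 with heq | hlt
      · obtain rfl : i = 1 := heq.symm
        have hm : ee p k 1 ∈ EF p k 1 0 :=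
          subset_span (Or.inl ⟨1, le_refl 1, le_refl 1, rfl⟩)
        rw [hQ.2.2 _ hm, hQ'.2.2 _ hm]
      · have hi : i = (i-1)+1 := by omega
        rw [hi, hQ.1 (i-1) (by omega) (by omega), hQ'.1 (i-1) (by omega) (by omega)]
    · rw [hQ.2.1 j h1 h2, hQ'.2.1 j h1 h2]
  | zero => rw [map_zero, map_zero]
  | add x y _ _ hx hy => rw [map_add, map_add, hx, hy]
  | smul c x _ hx => rw [map_smul, map_smul, hx]

end Orth
/-- Lemma 3.3(c), case `n-k-2 > k`.  For `λ = (n-k,k)` with `n-k`, `k`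
odd, `n-k-2 > k ≥ 1`, `n = 2m`, and `W = ⟨e_1⟩`: `W` is isotropic,
`W^⊥ = ⟨e_1, …, e_{n-k-1}, f_1, …, f_k⟩`, `W` and `W^⊥` are `x_λ`-invariant, and the
map `Q : W^⊥/W → V_(n-k-2,k)` determined by `Q(e_{j+1}+W) = √-1·e_j`,
`Q(f_j+W) = f_j` is an isomorphism of quadratic spaces satisfying
`Q ∘ x̄_λ = x_ν ∘ Q`.  Here `p` plays the role of `n - k`. -/
theorem statement6 (p k m : ℕ) (hpodd : Odd p) (hkodd : Odd k) (hk : 1 ≤ k)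
    (hgt : k + 2 < p) (hn : p + k = 2 * m) :
    EF p k 1 0 ≤ orth p k (EF p k 1 0) ∧
    orth p k (EF p k 1 0) = EF p k (p-1) k ∧
    (EF p k 1 0).map (xmap p k) ≤ EF p k 1 0 ∧
    (orth p k (EF p k 1 0)).map (xmap p k) ≤ orth p k (EF p k 1 0) ∧
    (∃ Q : V p k →ₗ[ℂ] V (p-2) k, QCondIII4 p k Q) ∧
    (∀ Q : V p k →ₗ[ℂ] V (p-2) k, QCondIII4 p k Q →
      (∀ u ∈ orth p k (EF p k 1 0), Q u = 0 → u ∈ EF p k 1 0) ∧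
      (∀ w : V (p-2) k, ∃ u ∈ orth p k (EF p k 1 0), Q u = w) ∧
      (∀ u ∈ orth p k (EF p k 1 0), ∀ v ∈ orth p k (EF p k 1 0),
        beta (p-2) k (Q u) (Q v) = beta p k u v) ∧
      (∀ u ∈ orth p k (EF p k 1 0),
        Q (xmap p k u) = xmap (p-2) k (Q u))) := by

  obtain ⟨a, ha⟩ := hpodd
  have hp5 : 5 ≤ p := by omega
  have hpq : p ≠ k := by omega
  have hpq2 : p - 2 ≠ k := by omega
  have horth := orth_eq p k hpq (by omega)
  refine ⟨?_, horth, ?_, ?_, ⟨Qzero p k, Qzero_cond p k⟩, ?_⟩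
  · -- W isotropic
    intro u hu
    rw [mem_orth p k hpq (by omega)]
    exact (mem_EF.mp hu).1 ⟨p-1, by omega⟩ (show 1 ≤ p-1 from by omega)
  · -- x W ≤ W
    rintro _ ⟨u, hu, rfl⟩
    obtain ⟨h1, h2⟩ := mem_EF.mp hu
    rw [mem_EF]
    refine ⟨fun i hi => ?_, fun j hj => ?_⟩
    · rw [xmap_inl]
      split
      · exact h1 _ (show 1 ≤ (i:ℕ)+1 from by omega)
      · rfl
    · rw [xmap_inr]
      split
      · exact h2 _ (Nat.zero_le _)
      · rfl
  · -- x orth ≤ orth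
    rintro _ ⟨u, hu, rfl⟩
    rw [mem_orth p k hpq (by omega), xmap_inl]
    exact dif_neg (show ¬(p-1+1 < p) from by omega)
  · -- part 6
    intro Q hQ
    have hQz := Qzero_cond p k
    have hag : ∀ u ∈ orth p k (EF p k 1 0), Q u = Qzero p k u := fun u hu =>
      Q_agree Q (Qzero p k) hQ hQz u (horth ▸ hu)
    have Qe1 : Q (ee p k 1) = 0 :=
      hQ.2.2 _ (subset_span (Or.inl ⟨1, le_rfl, le_rfl, rfl⟩))
    have Qee : ∀ i, 2 ≤ i → i ≤ p-1 → Q (ee p k i) = Complex.I • ee (p-2) k (i-1) := by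
      intro i h1 h2
      have h3 := hQ.1 (i-1) (by omega) (by omega)
      rwa [show (i-1)+1 = i from by omega] at h3
    refine ⟨?_, ?_, ?_, ?_⟩
    · -- kernel is W
      intro u hu hQu
      rw [hag u hu] at hQu
      have hu' : u (Sum.inl ⟨p-1, by omega⟩) = 0 := (mem_orth p k hpq (by omega) u).mp hu
      rw [mem_EF]
      constructor
      · intro i hi1
        rcases lt_or_ge ((i:ℕ)) (p-1) with hlt | hge
        · have h3 : Qzero p k u (Sum.inl ⟨(i:ℕ)-1, by omega⟩) = 0 := by rw [hQu]; rfl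
          rw [Qzero_inl] at h3
          have h4 : u (Sum.inl ⟨(i:ℕ)-1+1, by omega⟩) = 0 := by
            rcases mul_eq_zero.mp h3 with h | h
            · exact absurd h Complex.I_ne_zero
            · exact h
          have h5 : i = ⟨(i:ℕ)-1+1, by omega⟩ := Fin.ext (show (i:ℕ) = (i:ℕ)-1+1 from by omega)
          rw [h5]; exact h4
        · have h5 : i = ⟨p-1, by omega⟩ := Fin.ext (show (i:ℕ) = p-1 from by
            have := i.isLt; omega)
          rw [h5]; exact hu'
      · intro j hj
        have h3 : Qzero p k u (Sum.inr j) = 0 := by rw [hQu]; rfl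
        rwa [Qzero_inr] at h3
    · -- surjective
      intro w
      have hmem : (Sum.elim
          (fun i : Fin p => if h : 1 ≤ (i:ℕ) ∧ (i:ℕ) < p-1 then
            -Complex.I * w (Sum.inl ⟨(i:ℕ)-1, by omega⟩) else 0)
          (fun j => w (Sum.inr j)) : V p k) ∈ orth p k (EF p k 1 0) := by
        rw [mem_orth p k hpq (by omega)]
        exact dif_neg (show ¬(1 ≤ p-1 ∧ p-1 < p-1) from by omega)
      refine ⟨_, hmem, ?_⟩
      rw [hag _ hmem]
      funext s
      cases s with
      | inl i =>
        rw [Qzero_inl, Sum.elim_inl,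
          dif_pos (show 1 ≤ (i:ℕ)+1 ∧ (i:ℕ)+1 < p-1 from by omega), ← mul_assoc,
          show Complex.I * -Complex.I = 1 from by rw [mul_neg, Complex.I_mul_I, neg_neg],
          one_mul]
        rfl
      | inr j => rfl
    · -- beta preserved
      have hbeta : ∀ u ∈ EF p k (p-1) k, ∀ v ∈ EF p k (p-1) k,
          beta (p-2) k (Q u) (Q v) = beta p k u v := by
        intro u hu
        induction hu using Submodule.span_induction with
        | mem x hx =>
          intro v hv
          induction hv using Submodule.span_induction with
          | mem y hy =>
            rcases hx with ⟨i, hi1, hi2, rfl⟩ | ⟨i, hi1, hi2, rfl⟩ <;>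
              rcases hy with ⟨j, hj1, hj2, rfl⟩ | ⟨j, hj1, hj2, rfl⟩
            · -- ee ee
              rcases eq_or_lt_of_le hi1 with h1 | h1
              · obtain rfl : i = 1 := h1.symm
                rw [Qe1, map_zero, LinearMap.zero_apply,
                  beta_ee_ee p k 1 j hpq le_rfl (by omega) hj1 (by omega), if_neg (by omega)]
              · rcases eq_or_lt_of_le hj1 with h2 | h2
                · obtain rfl : j = 1 := h2.symm
                  rw [Qe1, map_zero,
                    beta_ee_ee p k i 1 hpq (by omega) (by omega) le_rfl (by omega),
                    if_neg (by omega)]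
                · rw [Qee i h1 hi2, Qee j h2 hj2]
                  simp only [map_smul, LinearMap.smul_apply, smul_eq_mul]
                  rw [beta_ee_ee (p-2) k (i-1) (j-1) hpq2 (by omega) (by omega) (by omega) (by omega),
                    beta_ee_ee p k i j hpq (by omega) (by omega) (by omega) (by omega)]
                  split_ifs with c1 c2 c3
                  · have hv : (-1:ℂ)^(i-1) = -(-1:ℂ)^(i-1-1) := by
                      conv_lhs => rw [show i-1 = (i-1-1)+1 from by omega]
                      rw [pow_succ]; ring
                    rw [← mul_assoc, Complex.I_mul_I, hv]
                    ring
                  · omega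
                  · omega
                  · ring
            · -- ee ff
              rw [hQ.2.1 j hj1 hj2, beta_ee_ff p k i j hpq]
              rcases eq_or_lt_of_le hi1 with h1 | h1
              · obtain rfl : i = 1 := h1.symm
                rw [Qe1, map_zero, LinearMap.zero_apply]
              · rw [Qee i h1 hi2]
                simp only [map_smul, LinearMap.smul_apply, smul_eq_mul]
                rw [beta_ee_ff (p-2) k (i-1) j hpq2, mul_zero]
            · -- ff ee
              rw [hQ.2.1 i hi1 hi2, beta_ff_ee p k i j hpq]
              rcases eq_or_lt_of_le hj1 with h2 | h2
              · obtain rfl : j = 1 := h2.symm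
                rw [Qe1, map_zero]
              · rw [Qee j h2 hj2, map_smul]
                rw [beta_ff_ee (p-2) k i (j-1) hpq2, smul_zero]
            · -- ff ff
              rw [hQ.2.1 i hi1 hi2, hQ.2.1 j hj1 hj2,
                beta_ff_ff (p-2) k i j hpq2 hi1 hi2 hj1 hj2,
                beta_ff_ff p k i j hpq hi1 hi2 hj1 hj2]
          | zero => simp only [map_zero]
          | add y z hy hz ihy ihz => simp only [map_add, ihy, ihz]
          | smul c y hy ihy => simp only [map_smul, ihy]
        | zero =>
          intro v hv
          simp only [map_zero, LinearMap.zero_apply]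
        | add x y hx hy ihx ihy =>
          intro v hv
          simp only [map_add, LinearMap.add_apply, ihx v hv, ihy v hv]
        | smul c x hx ihx =>
          intro v hv
          simp only [map_smul, LinearMap.smul_apply, ihx v hv]
      exact fun u hu v hv => hbeta u (horth ▸ hu) v (horth ▸ hv)
    · -- commutes with x
      intro u hu
      have hu' : u (Sum.inl ⟨p-1, by omega⟩) = 0 := (mem_orth p k hpq (by omega) u).mp hu
      have hxu : xmap p k u ∈ orth p k (EF p k 1 0) := by
        rw [mem_orth p k hpq (by omega), xmap_inl]
        exact dif_neg (show ¬(p-1+1 < p) from by omega)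
      rw [hag _ hxu, hag u hu]
      funext s
      cases s with
      | inl i =>
        have hi := i.isLt
        rw [Qzero_inl, xmap_inl p k, xmap_inl (p-2) k,
          dif_pos (show (i:ℕ)+1+1 < p from by omega)]
        by_cases hc : (i:ℕ)+1 < p-2
        · rw [dif_pos hc, Qzero_inl]
        · rw [dif_neg hc]
          have h5 : (⟨(i:ℕ)+1+1, by omega⟩ : Fin p) = ⟨p-1, by omega⟩ :=
            Fin.ext (show (i:ℕ)+1+1 = p-1 from by omega)
          rw [h5, hu', mul_zero]
      | inr j =>
        rw [Qzero_inr, xmap_inr p k, xmap_inr (p-2) k]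
        by_cases hc : (j:ℕ)+1 < k
        · rw [dif_pos hc, dif_pos hc, Qzero_inr]
        · rw [dif_neg hc, dif_neg hc]
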